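/- In the periodic 1D setting, assume E[y] > 0. Then the training variance of the Local Mixup minimizer is eventually nonincreasing in K: there exists K₀ such that for all K ≥ K₀, Var(f_{K+1}) ≤ Var(f_K). -/

import Mathlib

/-- The training mean `E[y] = (1/n)·Σ_{i ∈ ℤ/nℤ} y_i`. -/
noncomputable def trainMean (n : ℕ) [NeZero n] (y : ZMod n → ℝ) : ℝ :=
  (1 / (n : ℝ)) * ∑ i, y i

/-- `A_K(i) = (1/K)·Σ_{k=1}^{K−1} ((K−k)·y_{i−k} + k·y_{i+K−k})` (so `A_1(i) = 0`). -/
noncomputable def mixA (n : ℕ) (y : ZMod n → ℝ) (i : ZMod n) (K : ℕ) : ℝ :=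
  (1 / (K : ℝ)) * ∑ k ∈ Finset.Icc 1 (K - 1),
    (((K : ℝ) - (k : ℝ)) * y (i - (k : ZMod n)) + (k : ℝ) * y (i + ((K - k : ℕ) : ZMod n)))

/-- `S_1(i) = 0` and `S_{K+1}(i) = S_K(i) + A_{K+1}(i)`. -/
noncomputable def mixS (n : ℕ) (y : ZMod n → ℝ) (i : ZMod n) : ℕ → ℝ
  | 0 => 0
  | K + 1 => mixS n y i K + mixA n y i (K + 1)

/-- The Local Mixup minimizer `f_K(i) = (2/(K·(K+3)))·(2K·y_i + S_K(i))`. -/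
noncomputable def mixF (n : ℕ) (y : ZMod n → ℝ) (K : ℕ) (i : ZMod n) : ℝ :=
  (2 / ((K : ℝ) * ((K : ℝ) + 3))) * (2 * (K : ℝ) * y i + mixS n y i K)

/-- Training variance `Var(f) = (1/n)·Σ_i (f(i) − (1/n)·Σ_j f(j))²`. -/
noncomputable def trainVar (n : ℕ) [NeZero n] (f : ZMod n → ℝ) : ℝ :=
  (1 / (n : ℝ)) * ∑ i, (f i - (1 / (n : ℝ)) * ∑ j, f j) ^ 2


namespace LocalMixupAux
open Finset


variable (n : ℕ)

noncomputable def dS (v : ZMod n → ℝ) (m : ℕ) (i : ZMod n) : ℝ :=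
  ∑ k ∈ Finset.range m, v (i + (k : ZMod n))

noncomputable def gOp (v : ZMod n → ℝ) (m : ℕ) (i : ZMod n) : ℝ :=
  (1 / (m : ℝ)) * ∑ l ∈ Finset.range m, dS n v m (i - (l : ZMod n))

variable [NeZero n]

lemma sum_shift (v : ZMod n → ℝ) (c : ZMod n) : ∑ j : ZMod n, v (c + j) = ∑ j, v j :=
  Fintype.sum_equiv (Equiv.addLeft c) _ _ fun _ => rfl

lemma sum_subshift (v : ZMod n → ℝ) (c : ZMod n) : ∑ j : ZMod n, v (c - j) = ∑ j, v j :=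
  Fintype.sum_equiv (Equiv.subLeft c) _ _ fun _ => rfl

lemma sum_range_univ (v : ZMod n → ℝ) (c : ZMod n) :
    ∑ k ∈ Finset.range n, v (c + (k : ZMod n)) = ∑ j, v j := by
  rw [← sum_shift n v c]
  refine Finset.sum_nbij' (fun k => ((k : ZMod n))) (fun x => x.val) ?_ ?_ ?_ ?_ ?_
  · intro a _; exact mem_univ _
  · intro a _; exact mem_range.2 (ZMod.val_lt _)
  · intro a ha; exact ZMod.val_cast_of_lt (mem_range.1 ha)
  · intro a _; exact ZMod.natCast_zmod_val a
  · intro a _; rfl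

lemma dS_add_n (v : ZMod n → ℝ) (hv : ∑ j, v j = 0) (m : ℕ) (i : ZMod n) :
    dS n v (m + n) i = dS n v m i := by
  unfold dS
  rw [Finset.sum_range_add]
  have : ∑ k ∈ Finset.range n, v (i + ((m + k : ℕ) : ZMod n)) = 0 := by
    have := sum_range_univ n v (i + (m : ZMod n))
    rw [hv] at this
    rw [← this]
    apply Finset.sum_congr rfl
    intro k _
    push_cast
    ring_nf
  rw [this, add_zero]

lemma abs_dS_le (v : ZMod n → ℝ) (hv : ∑ j, v j = 0) (m : ℕ) (i : ZMod n) :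
    |dS n v m i| ≤ ∑ j, |v j| := by
  -- reduce mod n
  have key : ∀ q r, dS n v (r + q * n) i = dS n v r i := by
    intro q
    induction q with
    | zero => simp
    | succ p ih => intro r; rw [Nat.succ_mul, ← Nat.add_assoc, dS_add_n n v hv, ih]
  have hm : m = m % n + (m / n) * n := by
    rw [Nat.mod_add_div']
  rw [hm, key (m / n) (m % n)]
  -- now m % n < n, terms are distinct
  calc |dS n v (m % n) i| ≤ ∑ k ∈ Finset.range (m % n), |v (i + (k : ZMod n))| := by
        unfold dS; exact Finset.abs_sum_le_sum_abs _ _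
    _ = ∑ j ∈ (Finset.range (m % n)).image (fun k : ℕ => i + (k : ZMod n)), |v j| := by
        rw [Finset.sum_image]
        intro a ha b hb hab
        have ha' := mem_range.1 ha
        have hb' := mem_range.1 hb
        have hn := Nat.mod_lt m (Nat.pos_of_ne_zero (NeZero.ne n))
        have : ((a : ZMod n)) = (b : ZMod n) := by
          have := add_left_cancel hab
          exact this
        have := congrArg ZMod.val this
        rwa [ZMod.val_cast_of_lt (lt_trans ha' hn), ZMod.val_cast_of_lt (lt_trans hb' hn)] at this
    _ ≤ ∑ j, |v j| := by
        apply Finset.sum_le_sum_of_subset_of_nonneg (Finset.subset_univ _)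
        intro j _ _; exact abs_nonneg _


lemma sum_shift' (v : ZMod n → ℝ) (c : ZMod n) : ∑ j : ZMod n, v (j + c) = ∑ j, v j :=
  Fintype.sum_equiv (Equiv.addRight c) _ _ fun _ => rfl

lemma sum_subshift' (v : ZMod n → ℝ) (c : ZMod n) : ∑ j : ZMod n, v (j - c) = ∑ j, v j :=
  Fintype.sum_equiv (Equiv.subRight c) _ _ fun _ => rfl

lemma sum_neg (v : ZMod n → ℝ) : ∑ j : ZMod n, v (-j) = ∑ j, v j :=
  Fintype.sum_equiv (Equiv.neg _) _ _ fun _ => rfl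

lemma sum_dS_zero (v : ZMod n → ℝ) (hv : ∑ j, v j = 0) (m : ℕ) :
    ∑ j : ZMod n, dS n v m j = 0 := by
  unfold dS
  rw [Finset.sum_comm]
  have : ∀ k ∈ Finset.range m, ∑ j : ZMod n, v (j + (k : ZMod n)) = 0 := by
    intro k _; rw [sum_shift' n v _]; exact hv
  rw [Finset.sum_congr rfl this, Finset.sum_const, smul_zero]

lemma abs_gOp_le (v : ZMod n → ℝ) (hv : ∑ j, v j = 0) (m : ℕ) (i : ZMod n) :
    |gOp n v m i| ≤ (1 / (m : ℝ)) * (n * ∑ j, |v j|) := by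
  set w : ZMod n → ℝ := fun j => dS n v m (-j) with hw
  have hsum : ∑ l ∈ Finset.range m, dS n v m (i - (l : ZMod n)) = dS n w m (-i) := by
    unfold dS
    apply Finset.sum_congr rfl
    intro l _
    simp only [hw]
    congr 1
    · ring
  have hwsum : ∑ j, w j = 0 := by
    rw [hw]; simpa using (sum_neg n (fun j => dS n v m j)).trans (sum_dS_zero n v hv m)
  have hwabs : ∑ j, |w j| ≤ (n : ℝ) * ∑ j, |v j| := by
    calc ∑ j, |w j| ≤ ∑ _j : ZMod n, ∑ t, |v t| :=
          Finset.sum_le_sum fun j _ => abs_dS_le n v hv m (-j)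
      _ = (n : ℝ) * ∑ j, |v j| := by
          rw [Finset.sum_const, Finset.card_univ, ZMod.card, nsmul_eq_mul]
  have := abs_dS_le n w hwsum m (-i)
  unfold gOp
  rw [hsum, abs_mul, abs_of_nonneg (by positivity : (0:ℝ) ≤ 1 / (m:ℝ))]
  exact mul_le_mul_of_nonneg_left (le_trans this hwabs) (by positivity)

lemma inner_gOp_eq (v : ZMod n → ℝ) (m : ℕ) :
    ∑ i : ZMod n, v i * gOp n v m i = (1 / (m : ℝ)) * ∑ i : ZMod n, (dS n v m i) ^ 2 := by
  unfold gOp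
  have : ∀ i : ZMod n, v i * ((1 / (m:ℝ)) * ∑ l ∈ Finset.range m, dS n v m (i - (l : ZMod n)))
      = (1 / (m:ℝ)) * (v i * ∑ l ∈ Finset.range m, dS n v m (i - (l : ZMod n))) := by
    intro i; ring
  rw [Finset.sum_congr rfl (fun i _ => this i), ← Finset.mul_sum]
  congr 1
  calc ∑ i : ZMod n, v i * ∑ l ∈ Finset.range m, dS n v m (i - (l : ZMod n))
      = ∑ i : ZMod n, ∑ l ∈ Finset.range m, v i * dS n v m (i - (l : ZMod n)) := by
        apply Finset.sum_congr rfl; intro i _; rw [Finset.mul_sum]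
    _ = ∑ l ∈ Finset.range m, ∑ i : ZMod n, v i * dS n v m (i - (l : ZMod n)) :=
        Finset.sum_comm
    _ = ∑ l ∈ Finset.range m, ∑ j : ZMod n, v (j + (l : ZMod n)) * dS n v m j := by
        apply Finset.sum_congr rfl; intro l _
        refine (Fintype.sum_equiv (Equiv.addRight (l : ZMod n)) _ _ fun j => ?_).symm
        simp
    _ = ∑ j : ZMod n, ∑ l ∈ Finset.range m, dS n v m j * v (j + (l : ZMod n)) := by
        rw [Finset.sum_comm]; apply Finset.sum_congr rfl; intros; apply Finset.sum_congr rfl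
        intros; ring
    _ = ∑ j : ZMod n, (dS n v m j) ^ 2 := by
        apply Finset.sum_congr rfl; intro j _
        rw [← Finset.mul_sum]
        have : ∑ l ∈ Finset.range m, v (j + (l : ZMod n)) = dS n v m j := rfl
        rw [this]; ring

lemma inner_gOp_nonneg (v : ZMod n → ℝ) (m : ℕ) :
    0 ≤ ∑ i : ZMod n, v i * gOp n v m i := by
  rw [inner_gOp_eq]
  positivity

lemma sum_gOp_zero (v : ZMod n → ℝ) (hv : ∑ j, v j = 0) (m : ℕ) :
    ∑ i : ZMod n, gOp n v m i = 0 := by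
  unfold gOp
  rw [← Finset.mul_sum, Finset.sum_comm]
  have : ∀ l ∈ Finset.range m, ∑ i : ZMod n, dS n v m (i - (l : ZMod n)) = 0 := by
    intro l _
    rw [sum_subshift' n (fun j => dS n v m j) _]
    exact sum_dS_zero n v hv m
  rw [Finset.sum_congr rfl this, Finset.sum_const, smul_zero, mul_zero]

lemma gOp_add_const (v : ZMod n → ℝ) (c : ℝ) (m : ℕ) (hm : m ≠ 0) (i : ZMod n) :
    gOp n (fun j => v j + c) m i = gOp n v m i + m * c := by
  have hdS : ∀ j : ZMod n, dS n (fun t => v t + c) m j = dS n v m j + m * c := by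
    intro j; unfold dS
    rw [Finset.sum_add_distrib, Finset.sum_const, Finset.card_range, nsmul_eq_mul]
  unfold gOp
  rw [Finset.sum_congr rfl fun l _ => hdS _, Finset.sum_add_distrib, Finset.sum_const,
    Finset.card_range, nsmul_eq_mul, mul_add]
  have hm' : (m : ℝ) ≠ 0 := Nat.cast_ne_zero.2 hm
  field_simp

lemma doubleSum_eq (y : ZMod n → ℝ) (i : ZMod n) (m : ℕ) :
    ∑ l ∈ Finset.range m, ∑ k ∈ Finset.range m, y (i - (l : ZMod n) + (k : ZMod n))
      = m * y i + ∑ k ∈ Finset.Icc 1 m,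
          ((m : ℝ) - (k : ℝ)) * (y (i - (k : ZMod n)) + y (i + (k : ZMod n))) := by
  induction m with
  | zero => simp
  | succ m ih =>
    have C1 : ∑ l ∈ Finset.range m, y (i - (l : ZMod n) + ((m : ℕ) : ZMod n))
        = ∑ k ∈ Finset.Icc 1 m, y (i + (k : ZMod n)) := by
      refine Finset.sum_nbij' (fun l => m - l) (fun k => m - k) ?_ ?_ ?_ ?_ ?_
      · intro l hl; have := Finset.mem_range.1 hl; rw [Finset.mem_Icc]; omega
      · intro k hk; have := Finset.mem_Icc.1 hk; rw [Finset.mem_range]; omega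
      · intro l hl; have := Finset.mem_range.1 hl; omega
      · intro k hk; have := Finset.mem_Icc.1 hk; omega
      · intro l hl
        have hle : l ≤ m := le_of_lt (Finset.mem_range.1 hl)
        congr 1
        rw [Nat.cast_sub hle]
        ring
    have C2 : ∑ k ∈ Finset.range m, y (i - ((m : ℕ) : ZMod n) + (k : ZMod n))
        = ∑ k ∈ Finset.Icc 1 m, y (i - (k : ZMod n)) := by
      refine Finset.sum_nbij' (fun l => m - l) (fun k => m - k) ?_ ?_ ?_ ?_ ?_
      · intro l hl; have := Finset.mem_range.1 hl; rw [Finset.mem_Icc]; omega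
      · intro k hk; have := Finset.mem_Icc.1 hk; rw [Finset.mem_range]; omega
      · intro l hl; have := Finset.mem_range.1 hl; omega
      · intro k hk; have := Finset.mem_Icc.1 hk; omega
      · intro l hl
        have hle : l ≤ m := le_of_lt (Finset.mem_range.1 hl)
        congr 1
        rw [Nat.cast_sub hle]
        ring
    have expand : ∑ l ∈ Finset.range (m+1), ∑ k ∈ Finset.range (m+1),
          y (i - (l : ZMod n) + (k : ZMod n))
        = (∑ l ∈ Finset.range m, ∑ k ∈ Finset.range m, y (i - (l : ZMod n) + (k : ZMod n)))
          + (∑ l ∈ Finset.range m, y (i - (l : ZMod n) + ((m:ℕ) : ZMod n)))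
          + ((∑ k ∈ Finset.range m, y (i - ((m:ℕ) : ZMod n) + (k : ZMod n)))
          + y (i - ((m:ℕ) : ZMod n) + ((m:ℕ) : ZMod n))) := by
      calc ∑ l ∈ Finset.range (m+1), ∑ k ∈ Finset.range (m+1),
            y (i - (l : ZMod n) + (k : ZMod n))
          = ∑ l ∈ Finset.range (m+1), ((∑ k ∈ Finset.range m,
              y (i - (l : ZMod n) + (k : ZMod n))) + y (i - (l : ZMod n) + ((m:ℕ) : ZMod n))) :=
            Finset.sum_congr rfl fun l _ => Finset.sum_range_succ _ _
        _ = (∑ l ∈ Finset.range (m+1), ∑ k ∈ Finset.range m, y (i - (l : ZMod n) + (k : ZMod n)))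
            + ∑ l ∈ Finset.range (m+1), y (i - (l : ZMod n) + ((m:ℕ) : ZMod n)) :=
            Finset.sum_add_distrib
        _ = _ := by rw [Finset.sum_range_succ, Finset.sum_range_succ
              (fun l => y (i - (l : ZMod n) + ((m:ℕ) : ZMod n)))]; ring
    have hyi : y (i - ((m:ℕ) : ZMod n) + ((m:ℕ) : ZMod n)) = y i := by
      congr 1; ring
    have coefstep : ∑ k ∈ Finset.Icc 1 (m + 1),
          (((m + 1 : ℕ) : ℝ) - (k : ℝ)) * (y (i - (k : ZMod n)) + y (i + (k : ZMod n)))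
        = (∑ k ∈ Finset.Icc 1 m,
            ((m : ℝ) - (k : ℝ)) * (y (i - (k : ZMod n)) + y (i + (k : ZMod n))))
          + ∑ k ∈ Finset.Icc 1 m, (y (i - (k : ZMod n)) + y (i + (k : ZMod n))) := by
      rw [Finset.sum_Icc_succ_top (by omega : 1 ≤ m + 1), ← Finset.sum_add_distrib]
      push_cast
      rw [show ((m:ℝ) + 1 - ((m:ℝ) + 1)) = 0 by ring, zero_mul, add_zero]
      apply Finset.sum_congr rfl
      intros; ring
    rw [expand, ih, C1, C2, hyi, coefstep, Finset.sum_add_distrib]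
    push_cast
    ring

lemma mixA_eq (y : ZMod n → ℝ) (i : ZMod n) (m : ℕ) (hm : m ≠ 0) :
    mixA n y i m = gOp n y m i - y i := by
  have hm' : (m : ℝ) ≠ 0 := Nat.cast_ne_zero.2 hm
  have hg : gOp n y m i = (1 / (m : ℝ)) * ((m : ℝ) * y i + ∑ k ∈ Finset.Icc 1 m,
      ((m : ℝ) - (k : ℝ)) * (y (i - (k : ZMod n)) + y (i + (k : ZMod n)))) := by
    unfold gOp dS
    rw [doubleSum_eq]
  have hS2 : ∑ k ∈ Finset.Icc 1 (m - 1), (k : ℝ) * y (i + ((m - k : ℕ) : ZMod n))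
      = ∑ k ∈ Finset.Icc 1 (m - 1), ((m : ℝ) - (k : ℝ)) * y (i + (k : ZMod n)) := by
    refine Finset.sum_nbij' (fun k => m - k) (fun k => m - k) ?_ ?_ ?_ ?_ ?_
    · intro a ha; have := Finset.mem_Icc.1 ha; rw [Finset.mem_Icc]; omega
    · intro a ha; have := Finset.mem_Icc.1 ha; rw [Finset.mem_Icc]; omega
    · intro a ha; have := Finset.mem_Icc.1 ha; omega
    · intro a ha; have := Finset.mem_Icc.1 ha; omega
    · intro a ha
      have h1 := Finset.mem_Icc.1 ha
      have h3 : ((m - a : ℕ) : ℝ) = (m : ℝ) - (a : ℝ) := Nat.cast_sub (by omega)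
      rw [h3]
      ring
  have hA : mixA n y i m = (1 / (m : ℝ)) * ∑ k ∈ Finset.Icc 1 (m - 1),
      ((m : ℝ) - (k : ℝ)) * (y (i - (k : ZMod n)) + y (i + (k : ZMod n))) := by
    unfold mixA
    rw [Finset.sum_add_distrib, hS2, ← Finset.sum_add_distrib]
    congr 1
    apply Finset.sum_congr rfl
    intros; ring
  have hext : ∑ k ∈ Finset.Icc 1 m,
      ((m : ℝ) - (k : ℝ)) * (y (i - (k : ZMod n)) + y (i + (k : ZMod n)))
      = ∑ k ∈ Finset.Icc 1 (m - 1),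
      ((m : ℝ) - (k : ℝ)) * (y (i - (k : ZMod n)) + y (i + (k : ZMod n))) := by
    obtain ⟨p, rfl⟩ : ∃ p, m = p + 1 := ⟨m - 1, by omega⟩
    rw [Finset.sum_Icc_succ_top (by omega : 1 ≤ p + 1)]
    simp
  rw [hA, hg, hext]
  field_simp
  ring

lemma mixS_eq (y : ZMod n → ℝ) (i : ZMod n) (K : ℕ) :
    mixS n y i K = (∑ m ∈ Finset.Icc 1 K, gOp n y m i) - (K : ℝ) * y i := by
  induction K with
  | zero => simp [mixS]
  | succ K ih =>
    show mixS n y i K + mixA n y i (K + 1) = _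
    rw [ih, mixA_eq n y i (K + 1) (by omega),
      Finset.sum_Icc_succ_top (by omega : 1 ≤ K + 1)]
    push_cast
    ring

lemma mixF_eq (y : ZMod n → ℝ) (K : ℕ) (i : ZMod n) :
    mixF n y K i = (2 / ((K : ℝ) * ((K : ℝ) + 3)))
      * ((K : ℝ) * y i + ∑ m ∈ Finset.Icc 1 K, gOp n y m i) := by
  unfold mixF
  rw [mixS_eq]
  ring

lemma trainVar_mixF (y u : ZMod n → ℝ) (c : ℝ) (hyc : ∀ j, y j = u j + c)
    (hu0 : ∑ j, u j = 0) (K : ℕ) (hK : K ≠ 0) :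
    trainVar n (mixF n y K)
      = 4 / ((K : ℝ)^2 * ((K : ℝ) + 3)^2) * ((1 / (n : ℝ)) *
          ∑ i, ((K : ℝ) * u i + ∑ m ∈ Finset.Icc 1 K, gOp n u m i)^2) := by
  have hy : y = fun j => u j + c := funext hyc
  subst hy
  have hKR : ((K:ℝ)) ≠ 0 := Nat.cast_ne_zero.2 hK
  have hK3 : ((K:ℝ)) + 3 ≠ 0 := by positivity
  set aK : ℝ := 2 / ((K : ℝ) * ((K : ℝ) + 3)) with haK
  set P : ZMod n → ℝ := fun i => ∑ m ∈ Finset.Icc 1 K, gOp n u m i with hPdef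
  set cst : ℝ := aK * ((K : ℝ) * c + (∑ m ∈ Finset.Icc 1 K, (m : ℝ)) * c) with hcst
  have hf : ∀ i, mixF n (fun j => u j + c) K i = aK * ((K : ℝ) * u i + P i) + cst := by
    intro i
    rw [mixF_eq]
    have h1 : ∑ m ∈ Finset.Icc 1 K, gOp n (fun j => u j + c) m i
        = P i + (∑ m ∈ Finset.Icc 1 K, (m : ℝ)) * c := by
      have h2 : ∀ m ∈ Finset.Icc 1 K, gOp n (fun j => u j + c) m i
          = gOp n u m i + (m : ℝ) * c := fun m hm =>
        gOp_add_const n u c m (by have := (Finset.mem_Icc.1 hm).1; omega) i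
      rw [Finset.sum_congr rfl h2, Finset.sum_add_distrib, ← Finset.sum_mul, hPdef]
    rw [h1, hcst, haK]
    ring
  have hPsum : ∑ i, P i = 0 := by
    rw [hPdef]
    dsimp only
    rw [Finset.sum_comm]
    rw [Finset.sum_congr rfl (fun m _ => sum_gOp_zero n u hu0 m), Finset.sum_const, smul_zero]
  have hmean : (1 / (n : ℝ)) * ∑ j, mixF n (fun t => u t + c) K j = cst := by
    have hnR : ((n:ℝ)) ≠ 0 := Nat.cast_ne_zero.2 (NeZero.ne n)
    rw [Finset.sum_congr rfl (fun j _ => hf j)]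
    rw [Finset.sum_add_distrib, Finset.sum_const, Finset.card_univ, ZMod.card, nsmul_eq_mul]
    have : ∑ j, aK * ((K : ℝ) * u j + P j) = aK * ((K:ℝ) * ∑ j, u j + ∑ j, P j) := by
      rw [← Finset.mul_sum, Finset.sum_add_distrib, ← Finset.mul_sum]
    rw [this, hu0, hPsum]
    field_simp
    ring
  unfold trainVar
  rw [hmean]
  have hsq : ∀ i, (mixF n (fun t => u t + c) K i - cst)^2
      = aK^2 * ((K : ℝ) * u i + P i)^2 := by
    intro i; rw [hf i]; ring
  rw [Finset.sum_congr rfl (fun i _ => hsq i), ← Finset.mul_sum]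
  have haK2 : aK^2 = 4 / ((K : ℝ)^2 * ((K : ℝ) + 3)^2) := by
    rw [haK, div_pow, mul_pow]
    norm_num
  rw [haK2]
  ring


lemma arith (nR K U X Q Y Z W : ℝ) (hn : 1 ≤ nR) (hK : 10 * nR^4 ≤ K)
    (hU : 0 ≤ U) (hX : 0 ≤ X) (hQ : 0 ≤ Q)
    (hY : (K+1) * Y ≤ nR^2 * U) (hZ : Z ≤ nR^4 * U) (hW : W ≤ nR^4 * U) :
    4 / ((K+1)^2 * (K+4)^2) * ((K+1)^2*U + 2*(K+1)*X + Q + 2*(K+1)*Y + 2*Z + W)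
      ≤ 4 / (K^2 * (K+3)^2) * (K^2*U + 2*K*X + Q) := by
  have h2 : (1:ℝ) ≤ nR^2 := by nlinarith [sq_nonneg (nR - 1)]
  have h4 : (1:ℝ) ≤ nR^4 := by nlinarith [sq_nonneg (nR^2 - 1)]
  have h24 : nR^2 ≤ nR^4 := by nlinarith [mul_nonneg (sq_nonneg nR) (by linarith : (0:ℝ) ≤ nR^2 - 1)]
  have hK10 : (10:ℝ) ≤ K := by nlinarith
  have hKpos : (0:ℝ) < K := by linarith
  have d1 : (0:ℝ) < K^2 * (K+3)^2 := by positivity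
  have d2 : (0:ℝ) < (K+1)^2 * (K+4)^2 := by positivity
  have hR : 2*(K+1)*Y + 2*Z + W ≤ K/2 * U := by
    have e1 : 2*((K+1)*Y) ≤ 2*(nR^2*U) := by linarith
    have e2 : nR^2 * U ≤ nR^4 * U := mul_le_mul_of_nonneg_right h24 hU
    have e3 : 5*(nR^4*U) ≤ K/2 * U := by
      have : 5*nR^4 ≤ K/2 := by linarith
      nlinarith [mul_le_mul_of_nonneg_right this hU]
    nlinarith
  rw [div_mul_eq_mul_div, div_mul_eq_mul_div, div_le_div_iff₀ d2 d1]
  -- polynomial inequality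
  have cX : 0 ≤ X * (K*((K+1)^2*(K+4)^2) - (K+1)*(K^2*(K+3)^2)) := by
    apply mul_nonneg hX
    nlinarith [hKpos]
  have cQ : 0 ≤ Q * ((K+1)^2*(K+4)^2 - K^2*(K+3)^2) := by
    apply mul_nonneg hQ
    nlinarith [hKpos]
  have cU : 0 ≤ U * (4*(K^2*((K+1)^2*(K+4)^2) - (K+1)^2*(K^2*(K+3)^2)) - 2*K*(K^2*(K+3)^2)) := by
    apply mul_nonneg hU
    nlinarith [hKpos, pow_pos hKpos 2, pow_pos hKpos 3,
      mul_pos (pow_pos hKpos 2) (pow_pos hKpos 3), mul_pos hKpos hKpos]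
  have cR : (2*(K+1)*Y + 2*Z + W) * (K^2*(K+3)^2) ≤ (K/2*U) * (K^2*(K+3)^2) :=
    mul_le_mul_of_nonneg_right hR d1.le
  linarith [cX, cQ, cU, cR]


end LocalMixupAux

set_option maxHeartbeats 1000000 in
/-- In the periodic 1D setting, if `E[y] > 0` then the training variance of
the Local Mixup minimizer is eventually nonincreasing in `K`. -/
theorem localMixup_variance_eventually_nonincreasing (n : ℕ) [NeZero n] (y : ZMod n → ℝ)
    (hEy : 0 < trainMean n y) :
    ∃ K₀ : ℕ, ∀ K : ℕ, K₀ ≤ K →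
      trainVar n (mixF n y (K + 1)) ≤ trainVar n (mixF n y K) := by
  classical
  refine ⟨10 * n ^ 4, fun K hK => ?_⟩
  have hn1 : 1 ≤ n := Nat.one_le_iff_ne_zero.2 (NeZero.ne n)
  have hn4 : 1 ≤ n ^ 4 := Nat.one_le_pow 4 n (by omega)
  have hKne : K ≠ 0 := by omega
  have hnR : ((n : ℝ)) ≠ 0 := Nat.cast_ne_zero.2 (NeZero.ne n)
  have h1n : (0:ℝ) ≤ 1 / (n : ℝ) := by positivity
  set c := trainMean n y with hc
  set u : ZMod n → ℝ := fun j => y j - c with hudef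
  have hyc : ∀ j, y j = u j + c := fun j => by simp [hudef]
  have hu0 : ∑ j, u j = 0 := by
    simp only [hudef]
    rw [Finset.sum_sub_distrib, Finset.sum_const, Finset.card_univ, ZMod.card, nsmul_eq_mul, hc]
    unfold trainMean
    field_simp
    ring
  rw [LocalMixupAux.trainVar_mixF n y u c hyc hu0 K hKne,
    LocalMixupAux.trainVar_mixF n y u c hyc hu0 (K+1) (Nat.succ_ne_zero K)]
  set Pf : ZMod n → ℝ := fun i => ∑ m ∈ Finset.Icc 1 K, LocalMixupAux.gOp n u m i with hPdef
  set gf : ZMod n → ℝ := fun i => LocalMixupAux.gOp n u (K+1) i with hgdef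
  set U := ∑ i : ZMod n, (u i)^2 with hUdef
  set X := ∑ i : ZMod n, u i * Pf i with hXdef
  set Q := ∑ i : ZMod n, (Pf i)^2 with hQdef
  set Y := ∑ i : ZMod n, u i * gf i with hYdef
  set Z := ∑ i : ZMod n, Pf i * gf i with hZdef
  set W := ∑ i : ZMod n, (gf i)^2 with hWdef
  set N := ∑ i : ZMod n, |u i| with hNdef
  have hPF : ∀ i, ∑ m ∈ Finset.Icc 1 K, LocalMixupAux.gOp n u m i = Pf i := fun i => by
    simp only [hPdef]
  have hsplit : ∀ i, ∑ m ∈ Finset.Icc 1 (K+1), LocalMixupAux.gOp n u m i = Pf i + gf i := by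
    intro i
    rw [Finset.sum_Icc_succ_top (by omega : 1 ≤ K + 1), hPF i]
  have hold : ∑ i, ((K:ℝ) * u i + ∑ m ∈ Finset.Icc 1 K, LocalMixupAux.gOp n u m i)^2
      = (K:ℝ)^2 * U + 2*(K:ℝ) * X + Q := by
    have e1 : ∀ i : ZMod n, ((K:ℝ) * u i + ∑ m ∈ Finset.Icc 1 K, LocalMixupAux.gOp n u m i)^2
        = (K:ℝ)^2 * (u i)^2 + (2*(K:ℝ)) * (u i * Pf i) + (Pf i)^2 := by
      intro i; rw [hPF i]; ring
    rw [Finset.sum_congr rfl (fun i _ => e1 i), Finset.sum_add_distrib, Finset.sum_add_distrib,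
      ← Finset.mul_sum, ← Finset.mul_sum, ← hUdef, ← hXdef, ← hQdef]
  have hnew : ∑ i, (((K+1 : ℕ):ℝ) * u i + ∑ m ∈ Finset.Icc 1 (K+1), LocalMixupAux.gOp n u m i)^2
      = ((K:ℝ)+1)^2*U + (2*((K:ℝ)+1))*X + Q + (2*((K:ℝ)+1))*Y + 2*Z + W := by
    have e1 : ∀ i : ZMod n, (((K+1 : ℕ):ℝ) * u i
          + ∑ m ∈ Finset.Icc 1 (K+1), LocalMixupAux.gOp n u m i)^2
        = ((K:ℝ)+1)^2*(u i)^2 + (2*((K:ℝ)+1))*(u i * Pf i) + (Pf i)^2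
          + (2*((K:ℝ)+1))*(u i * gf i) + 2*(Pf i * gf i) + (gf i)^2 := by
      intro i; rw [hsplit i]; push_cast; ring
    rw [Finset.sum_congr rfl (fun i _ => e1 i), Finset.sum_add_distrib, Finset.sum_add_distrib,
      Finset.sum_add_distrib, Finset.sum_add_distrib, Finset.sum_add_distrib,
      ← Finset.mul_sum, ← Finset.mul_sum, ← Finset.mul_sum, ← Finset.mul_sum,
      ← hUdef, ← hXdef, ← hQdef, ← hYdef, ← hZdef, ← hWdef]
  have hNnn : (0:ℝ) ≤ N := by rw [hNdef]; positivity
  have hU0 : (0:ℝ) ≤ U := by rw [hUdef]; positivity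
  have hQ0 : (0:ℝ) ≤ Q := by rw [hQdef]; positivity
  have hX0 : (0:ℝ) ≤ X := by
    rw [hXdef]
    simp only [hPdef]
    have h2 : ∀ i : ZMod n, u i * ∑ m ∈ Finset.Icc 1 K, LocalMixupAux.gOp n u m i
        = ∑ m ∈ Finset.Icc 1 K, u i * LocalMixupAux.gOp n u m i := fun i => Finset.mul_sum _ _ _
    rw [Finset.sum_congr rfl fun i _ => h2 i, Finset.sum_comm]
    exact Finset.sum_nonneg fun m _ => LocalMixupAux.inner_gOp_nonneg n u m
  have hNU : N^2 ≤ (n:ℝ) * U := by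
    rw [hNdef, hUdef]
    have h := sq_sum_le_card_mul_sum_sq (s := (Finset.univ : Finset (ZMod n)))
      (f := fun i => |u i|)
    simp only [sq_abs] at h
    simpa [Finset.card_univ, ZMod.card] using h
  have hKp : (0:ℝ) < (K:ℝ) + 1 := by positivity
  have habs_g : ∀ i, |gf i| ≤ 1/((K:ℝ)+1) * ((n:ℝ) * N) := by
    intro i
    have h := LocalMixupAux.abs_gOp_le n u hu0 (K+1) i
    simp only [hgdef]
    rw [hNdef]
    push_cast at h ⊢
    exact h
  have habs_P : ∀ i, |Pf i| ≤ (K:ℝ) * ((n:ℝ) * N) := by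
    intro i
    simp only [hPdef]
    calc |∑ m ∈ Finset.Icc 1 K, LocalMixupAux.gOp n u m i|
        ≤ ∑ m ∈ Finset.Icc 1 K, |LocalMixupAux.gOp n u m i| := Finset.abs_sum_le_sum_abs _ _
      _ ≤ ∑ _m ∈ Finset.Icc 1 K, (n:ℝ) * N := by
          apply Finset.sum_le_sum
          intro m hm
          have h := LocalMixupAux.abs_gOp_le n u hu0 m i
          rw [hNdef]
          have hm1 : 1 ≤ m := (Finset.mem_Icc.1 hm).1
          have hmR : (1:ℝ) ≤ (m:ℝ) := by exact_mod_cast hm1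
          have hb : 1/(m:ℝ) * ((n:ℝ) * ∑ j, |u j|) ≤ (n:ℝ) * ∑ j, |u j| := by
            have h2 : 1/(m:ℝ) ≤ 1 := by rw [div_le_one (by linarith)]; linarith
            have h3 : (0:ℝ) ≤ (n:ℝ) * ∑ j, |u j| := by positivity
            nlinarith
          exact le_trans h hb
      _ = (K:ℝ) * ((n:ℝ) * N) := by
          rw [Finset.sum_const, Nat.card_Icc, Nat.add_sub_cancel, nsmul_eq_mul]
  have hY2 : ((K:ℝ)+1) * Y ≤ (n:ℝ)^2 * U := by
    have hY1 : Y ≤ N * (1/((K:ℝ)+1) * ((n:ℝ) * N)) := by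
      rw [hYdef]
      calc ∑ i : ZMod n, u i * gf i ≤ ∑ i : ZMod n, |u i * gf i| :=
            Finset.sum_le_sum fun i _ => le_abs_self _
        _ = ∑ i : ZMod n, |u i| * |gf i| := by
            apply Finset.sum_congr rfl; intros; rw [abs_mul]
        _ ≤ ∑ i : ZMod n, |u i| * (1/((K:ℝ)+1) * ((n:ℝ) * N)) :=
            Finset.sum_le_sum fun i _ => mul_le_mul_of_nonneg_left (habs_g i) (abs_nonneg _)
        _ = N * (1/((K:ℝ)+1) * ((n:ℝ) * N)) := by rw [← Finset.sum_mul, ← hNdef]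
    have hid : ((K:ℝ)+1) * (N * (1/((K:ℝ)+1) * ((n:ℝ) * N))) = (n:ℝ) * N^2 := by
      field_simp
    calc ((K:ℝ)+1) * Y ≤ ((K:ℝ)+1) * (N * (1/((K:ℝ)+1) * ((n:ℝ) * N))) :=
          mul_le_mul_of_nonneg_left hY1 hKp.le
      _ = (n:ℝ) * N^2 := hid
      _ ≤ (n:ℝ) * ((n:ℝ) * U) := mul_le_mul_of_nonneg_left hNU (by positivity)
      _ = (n:ℝ)^2 * U := by ring
  have hZb : Z ≤ (n:ℝ)^4 * U := by
    have hfrac : (K:ℝ) * (1/((K:ℝ)+1)) ≤ 1 := by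
      rw [mul_one_div, div_le_one hKp]; linarith
    have hp1 : Z ≤ ∑ _i : ZMod n, ((K:ℝ) * ((n:ℝ)*N)) * (1/((K:ℝ)+1) * ((n:ℝ)*N)) := by
      rw [hZdef]
      apply Finset.sum_le_sum
      intro i _
      calc Pf i * gf i ≤ |Pf i * gf i| := le_abs_self _
        _ = |Pf i| * |gf i| := abs_mul _ _
        _ ≤ ((K:ℝ) * ((n:ℝ)*N)) * (1/((K:ℝ)+1) * ((n:ℝ)*N)) :=
            mul_le_mul (habs_P i) (habs_g i) (abs_nonneg _) (by positivity)
    rw [Finset.sum_const, Finset.card_univ, ZMod.card, nsmul_eq_mul] at hp1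
    have h3 : (0:ℝ) ≤ (n:ℝ)^2 * N^2 := by positivity
    have e := mul_le_mul_of_nonneg_left (mul_le_mul_of_nonneg_right hfrac h3)
      (Nat.cast_nonneg n : (0:ℝ) ≤ (n:ℝ))
    have hfin : (n:ℝ)^3 * N^2 ≤ (n:ℝ)^4 * U := by
      calc (n:ℝ)^3 * N^2 ≤ (n:ℝ)^3 * ((n:ℝ)*U) := mul_le_mul_of_nonneg_left hNU (by positivity)
        _ = (n:ℝ)^4 * U := by ring
    nlinarith [hp1, e, hfin]
  have hWb : W ≤ (n:ℝ)^4 * U := by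
    have hp1 : W ≤ ∑ _i : ZMod n, (1/((K:ℝ)+1) * ((n:ℝ)*N))^2 := by
      rw [hWdef]
      apply Finset.sum_le_sum
      intro i _
      calc (gf i)^2 = |gf i|^2 := (sq_abs _).symm
        _ ≤ (1/((K:ℝ)+1) * ((n:ℝ)*N))^2 := pow_le_pow_left₀ (abs_nonneg _) (habs_g i) 2
    rw [Finset.sum_const, Finset.card_univ, ZMod.card, nsmul_eq_mul] at hp1
    have ht1 : (1/((K:ℝ)+1)) ≤ 1 := by rw [div_le_one hKp]; linarith
    have ht0 : (0:ℝ) ≤ 1/((K:ℝ)+1) := by positivity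
    have h3 : (0:ℝ) ≤ (n:ℝ)^2 * N^2 := by positivity
    have hfin : (n:ℝ)^3 * N^2 ≤ (n:ℝ)^4 * U := by
      calc (n:ℝ)^3 * N^2 ≤ (n:ℝ)^3 * ((n:ℝ)*U) := mul_le_mul_of_nonneg_left hNU (by positivity)
        _ = (n:ℝ)^4 * U := by ring
    have hsq : (1/((K:ℝ)+1)) * (1/((K:ℝ)+1)) ≤ 1 := by nlinarith [ht1, ht0]
    have e := mul_le_mul_of_nonneg_right hsq h3
    have e2 := mul_le_mul_of_nonneg_left e (Nat.cast_nonneg n : (0:ℝ) ≤ (n:ℝ))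
    nlinarith [hp1, e2, hfin]
  have hKcast : 10 * (n:ℝ)^4 ≤ (K:ℝ) := by
    have h := (Nat.cast_le (α := ℝ)).2 hK
    push_cast at h
    linarith
  have harith := LocalMixupAux.arith (n:ℝ) (K:ℝ) U X Q Y Z W (by exact_mod_cast hn1) hKcast
    hU0 hX0 hQ0 hY2 hZb hWb
  rw [hold, hnew]
  push_cast
  have h48 : ((K:ℝ)) + 1 + 3 = (K:ℝ) + 4 := by ring
  rw [h48, mul_left_comm (4 / (((K:ℝ)+1)^2*((K:ℝ)+4)^2)),
    mul_left_comm (4 / ((K:ℝ)^2*((K:ℝ)+3)^2))]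
  exact mul_le_mul_of_nonneg_left harith h1n
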